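/- Assume α > 2 and that w_s and w_g are nonincreasing and continuous on [0, π] with values in [0, 1] and w_s(0)·w_g(0) > 0. Then the aggregate interference-to-noise ratio of the regular configuration diverges in the high-density limit: η(Δ) → ∞ as Δ → 0⁺. -/

import Mathlib

open Real

/-- Distance `‖s_{i,j}‖ = sqrt((iΔ/2)² + 3(jΔ/2)² + h²)` from the origin terminal to
satellite `s_{i,j}` of the regular configuration. -/
noncomputable def snorm (Δ h : ℝ) (i j : ℤ) : ℝ :=
  Real.sqrt ((i * Δ / 2) ^ 2 + 3 * (j * Δ / 2) ^ 2 + h ^ 2)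

/-- Off-axis angle `θ^reg_{i,j}(Δ) = arccos(h/‖s_{i,j}‖)`. -/
noncomputable def θreg (Δ h : ℝ) (i j : ℤ) : ℝ :=
  Real.arccos (h / snorm Δ h i j)

/-- Aggregate interference-to-noise ratio `η(Δ)` of the regular configuration. -/
noncomputable def ηreg (ws wg : ℝ → ℝ) (h α p σ2 : ℝ) (Δ : ℝ) : ℝ :=
  (p / σ2) * ∑' q : ℤ × ℤ,
    if q.1 % 2 = q.2 % 2 ∧ q ≠ (0, 0) then
      snorm Δ h q.1 q.2 ^ (-α) * (ws (θreg Δ h q.1 q.2) * wg (θreg Δ h q.1 q.2))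
    else 0

/-- Spectral efficiency of the regular configuration,
`R^reg(Δ) = (2/(Δ²√3))·log₂(1 + γ/(η(Δ) + 1))` with `γ = (p/σ²)h^{−α}`. -/
noncomputable def Rreg (ws wg : ℝ → ℝ) (h α p σ2 : ℝ) (Δ : ℝ) : ℝ :=
  (2 / (Δ ^ 2 * Real.sqrt 3)) *
    Real.logb 2 (1 + (p / σ2) * h ^ (-α) / (ηreg ws wg h α p σ2 Δ + 1))

open Filter in
private lemma snorm_ge {h : ℝ} (hh : 0 < h) (Δ : ℝ) (i j : ℤ) : h ≤ snorm Δ h i j := by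
  rw [snorm]
  calc h = Real.sqrt (h ^ 2) := (Real.sqrt_sq hh.le).symm
  _ ≤ _ := Real.sqrt_le_sqrt (by nlinarith [sq_nonneg ((i:ℝ) * Δ / 2), sq_nonneg ((j:ℝ) * Δ / 2)])

lemma snorm_pos {h : ℝ} (hh : 0 < h) (Δ : ℝ) (i j : ℤ) : 0 < snorm Δ h i j :=
  hh.trans_le (snorm_ge hh Δ i j)

lemma θreg_mem (Δ h : ℝ) (i j : ℤ) : θreg Δ h i j ∈ Set.Icc (0:ℝ) π :=
  ⟨Real.arccos_nonneg _, Real.arccos_le_pi _⟩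

lemma snorm_ge_lattice {h Δ : ℝ} (hh : 0 < h) (hΔ : 0 < Δ) (i j : ℤ) :
    Δ / 2 * max (i.natAbs : ℝ) (j.natAbs : ℝ) ≤ snorm Δ h i j := by
  rw [snorm, Nat.cast_natAbs, Nat.cast_natAbs, Int.cast_abs, Int.cast_abs]
  have ei : (Δ / 2 * |(i:ℝ)|) ^ 2 = ((i:ℝ) * Δ / 2) ^ 2 := by rw [mul_pow, sq_abs]; ring
  have ej : (Δ / 2 * |(j:ℝ)|) ^ 2 = ((j:ℝ) * Δ / 2) ^ 2 := by rw [mul_pow, sq_abs]; ring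
  have h2 : (Δ / 2 * max |(i:ℝ)| |(j:ℝ)|) ^ 2 ≤ (i * Δ / 2) ^ 2 + 3 * (j * Δ / 2) ^ 2 + h ^ 2 := by
    rcases max_cases |(i:ℝ)| |(j:ℝ)| with ⟨he, _⟩ | ⟨he, _⟩ <;> rw [he] <;>
      nlinarith [sq_nonneg ((i:ℝ) * Δ / 2), sq_nonneg ((j:ℝ) * Δ / 2), sq_nonneg h]
  calc Δ / 2 * max |(i:ℝ)| |(j:ℝ)|
      = Real.sqrt ((Δ / 2 * max |(i:ℝ)| |(j:ℝ)|) ^ 2) := by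
        rw [Real.sqrt_sq (by positivity)]
  _ ≤ _ := Real.sqrt_le_sqrt h2


open Filter in
private lemma eta_summable {ws wg : ℝ → ℝ} {h α Δ : ℝ} (hh : 0 < h) (hα : 2 < α) (hΔ : 0 < Δ)
    (hws_mem : ∀ θ ∈ Set.Icc (0 : ℝ) π, ws θ ∈ Set.Icc (0 : ℝ) 1)
    (hwg_mem : ∀ θ ∈ Set.Icc (0 : ℝ) π, wg θ ∈ Set.Icc (0 : ℝ) 1) :
    Summable (fun q : ℤ × ℤ =>
      if q.1 % 2 = q.2 % 2 ∧ q ≠ (0, 0) then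
        snorm Δ h q.1 q.2 ^ (-α) * (ws (θreg Δ h q.1 q.2) * wg (θreg Δ h q.1 q.2))
      else 0) := by
  have hbig : Summable (fun x : Fin 2 → ℤ => ‖x‖ ^ (-α)) :=
    EisensteinSeries.summable_one_div_norm_rpow hα
  have hbig2 : Summable (fun q : ℤ × ℤ => ‖(finTwoArrowEquiv ℤ).symm q‖ ^ (-α)) :=
    (finTwoArrowEquiv ℤ).symm.summable_iff.mpr hbig
  refine Summable.of_nonneg_of_le ?_ ?_ (hbig2.mul_left ((Δ / 2) ^ (-α)))
  · intro q
    split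
    · have hθ := θreg_mem Δ h q.1 q.2
      have hw1 := (hws_mem _ hθ).1
      have hw2 := (hwg_mem _ hθ).1
      have hr := Real.rpow_nonneg (Real.sqrt_nonneg
        ((q.1 * Δ / 2) ^ 2 + 3 * (q.2 * Δ / 2) ^ 2 + h ^ 2)) (-α)
      exact mul_nonneg hr (mul_nonneg hw1 hw2)
    · exact le_refl 0
  · intro q
    split
    · rename_i hc
      obtain ⟨-, hq0⟩ := hc
      set x := (finTwoArrowEquiv ℤ).symm q with hx
      have hx0 : x ≠ 0 := by
        intro h0
        apply hq0
        have h1 := congrArg (finTwoArrowEquiv ℤ) h0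
        rw [hx, Equiv.apply_symm_apply] at h1
        simpa [finTwoArrowEquiv] using h1
      have hnx : (0:ℝ) < ‖x‖ := norm_pos_iff.mpr hx0
      have hnorm : ‖x‖ = max (q.1.natAbs : ℝ) (q.2.natAbs : ℝ) := by
        rw [EisensteinSeries.norm_eq_max_natAbs]
        simp [hx, finTwoArrowEquiv, Nat.cast_max]
      have hle : Δ / 2 * ‖x‖ ≤ snorm Δ h q.1 q.2 := by
        rw [hnorm]; exact snorm_ge_lattice hh hΔ _ _
      have h1 : snorm Δ h q.1 q.2 ^ (-α) ≤ (Δ / 2 * ‖x‖) ^ (-α) :=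
        Real.rpow_le_rpow_of_nonpos (by positivity) hle (by linarith)
      have hθ := θreg_mem Δ h q.1 q.2
      have hws := hws_mem _ hθ
      have hwg := hwg_mem _ hθ
      have hsn : (0:ℝ) ≤ snorm Δ h q.1 q.2 ^ (-α) :=
        Real.rpow_nonneg (Real.sqrt_nonneg _) _
      calc snorm Δ h q.1 q.2 ^ (-α) * (ws (θreg Δ h q.1 q.2) * wg (θreg Δ h q.1 q.2))
          ≤ snorm Δ h q.1 q.2 ^ (-α) * 1 := by
            refine mul_le_mul_of_nonneg_left ?_ hsn
            exact mul_le_one₀ hws.2 hwg.1 hwg.2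
        _ = snorm Δ h q.1 q.2 ^ (-α) := mul_one _
        _ ≤ (Δ / 2 * ‖x‖) ^ (-α) := h1
        _ = (Δ / 2) ^ (-α) * ‖x‖ ^ (-α) := Real.mul_rpow (by positivity) (norm_nonneg _)
    · positivity


open Filter in
private lemma term_tendsto {ws wg : ℝ → ℝ} {h : ℝ} (α : ℝ) (hh : 0 < h)
    (hws_cont : ContinuousOn ws (Set.Icc (0 : ℝ) π))
    (hwg_cont : ContinuousOn wg (Set.Icc (0 : ℝ) π)) (i j : ℤ) :
    Tendsto (fun Δ => snorm Δ h i j ^ (-α) * (ws (θreg Δ h i j) * wg (θreg Δ h i j)))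
      (nhdsWithin 0 (Set.Ioi 0)) (nhds (h ^ (-α) * (ws 0 * wg 0))) := by
  have hcont : Continuous fun Δ : ℝ => snorm Δ h i j := by
    unfold snorm; fun_prop
  have h0 : snorm 0 h i j = h := by
    simp [snorm, Real.sqrt_sq hh.le]
  have h1 : Tendsto (fun Δ => snorm Δ h i j) (nhdsWithin 0 (Set.Ioi 0)) (nhds h) := by
    have := hcont.tendsto 0
    rw [h0] at this
    exact this.mono_left nhdsWithin_le_nhds
  have h2 : Tendsto (fun Δ => θreg Δ h i j) (nhdsWithin 0 (Set.Ioi 0)) (nhds 0) := by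
    have hdiv : Tendsto (fun Δ => h / snorm Δ h i j) (nhdsWithin 0 (Set.Ioi 0)) (nhds 1) := by
      have := Filter.Tendsto.div (tendsto_const_nhds (x := h)) h1 hh.ne'
      rw [div_self hh.ne'] at this
      exact this
    have := (Real.continuous_arccos.tendsto 1).comp hdiv
    simpa [θreg, Function.comp_def, Real.arccos_one] using this
  have h2' : Tendsto (fun Δ => θreg Δ h i j) (nhdsWithin 0 (Set.Ioi 0))
      (nhdsWithin 0 (Set.Icc 0 π)) :=
    tendsto_nhdsWithin_iff.mpr ⟨h2, Filter.Eventually.of_forall fun Δ => θreg_mem Δ h i j⟩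
  have h3 : Tendsto (fun Δ => ws (θreg Δ h i j)) (nhdsWithin 0 (Set.Ioi 0)) (nhds (ws 0)) :=
    (hws_cont 0 ⟨le_refl 0, Real.pi_pos.le⟩).tendsto.comp h2'
  have h4 : Tendsto (fun Δ => wg (θreg Δ h i j)) (nhdsWithin 0 (Set.Ioi 0)) (nhds (wg 0)) :=
    (hwg_cont 0 ⟨le_refl 0, Real.pi_pos.le⟩).tendsto.comp h2'
  have h5 : Tendsto (fun Δ => snorm Δ h i j ^ (-α)) (nhdsWithin 0 (Set.Ioi 0))
      (nhds (h ^ (-α))) := h1.rpow_const (Or.inl hh.ne')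
  exact h5.mul (h3.mul h4)


/-- The aggregate interference-to-noise ratio of the regular configuration diverges in
the high-density limit: `η(Δ) → ∞` as `Δ → 0⁺`. -/
theorem eta_tendsto_atTop
    (ws wg : ℝ → ℝ) (h α p σ2 : ℝ)
    (hh : 0 < h) (hα : 2 < α) (hp : 0 < p) (hσ : 0 < σ2)
    (hws_anti : AntitoneOn ws (Set.Icc (0 : ℝ) π))
    (hwg_anti : AntitoneOn wg (Set.Icc (0 : ℝ) π))
    (hws_cont : ContinuousOn ws (Set.Icc (0 : ℝ) π))
    (hwg_cont : ContinuousOn wg (Set.Icc (0 : ℝ) π))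
    (hws_mem : ∀ θ ∈ Set.Icc (0 : ℝ) π, ws θ ∈ Set.Icc (0 : ℝ) 1)
    (hwg_mem : ∀ θ ∈ Set.Icc (0 : ℝ) π, wg θ ∈ Set.Icc (0 : ℝ) 1)
    (hpos : 0 < ws 0 * wg 0) :
    Filter.Tendsto (ηreg ws wg h α p σ2) (nhdsWithin 0 (Set.Ioi 0)) Filter.atTop := by
  set c : ℝ := h ^ (-α) * (ws 0 * wg 0) with hc_def
  have hc : 0 < c := mul_pos (Real.rpow_pos_of_pos hh _) hpos
  have hpσ : 0 < p / σ2 := div_pos hp hσ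
  rw [Filter.tendsto_atTop]
  intro M
  obtain ⟨n, hn⟩ := exists_nat_ge (M / (p / σ2 * (c / 2)))
  set g : ℕ → ℤ × ℤ := fun k => ((2 * (k : ℤ) + 2), (0 : ℤ)) with hg_def
  have hg_inj : Function.Injective g := by
    intro a b hab
    have := congrArg Prod.fst hab
    simp only [hg_def] at this
    omega
  set F : Finset (ℤ × ℤ) := (Finset.range n).image g with hF_def
  have hFcard : F.card = n := by
    rw [hF_def, Finset.card_image_of_injective _ hg_inj, Finset.card_range]
  have hFcond : ∀ q ∈ F, q.1 % 2 = q.2 % 2 ∧ q ≠ (0, 0) := by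
    intro q hq
    rw [hF_def, Finset.mem_image] at hq
    obtain ⟨k, -, rfl⟩ := hq
    constructor
    · simp only [hg_def]; omega
    · simp only [hg_def, ne_eq, Prod.mk.injEq]
      rintro ⟨h1, -⟩
      omega
  -- eventually each term in F is ≥ c/2
  have hev : ∀ᶠ Δ in nhdsWithin (0:ℝ) (Set.Ioi 0), ∀ q ∈ F,
      c / 2 ≤ snorm Δ h q.1 q.2 ^ (-α) * (ws (θreg Δ h q.1 q.2) * wg (θreg Δ h q.1 q.2)) := by
    rw [Filter.eventually_all_finset]
    intro q hq
    exact (term_tendsto α hh hws_cont hwg_cont q.1 q.2).eventually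
      (eventually_ge_nhds (by linarith))
  filter_upwards [hev, self_mem_nhdsWithin] with Δ hΔterms hΔ
  have hΔ0 : (0:ℝ) < Δ := hΔ
  set f : ℤ × ℤ → ℝ := fun q =>
    if q.1 % 2 = q.2 % 2 ∧ q ≠ (0, 0) then
      snorm Δ h q.1 q.2 ^ (-α) * (ws (θreg Δ h q.1 q.2) * wg (θreg Δ h q.1 q.2))
    else 0 with hf_def
  have hsum : Summable f := eta_summable hh hα hΔ0 hws_mem hwg_mem
  have hf_nonneg : ∀ q, 0 ≤ f q := by
    intro q
    rw [hf_def]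
    beta_reduce
    split
    · have hθ := θreg_mem Δ h q.1 q.2
      exact mul_nonneg (Real.rpow_nonneg (Real.sqrt_nonneg _) _)
        (mul_nonneg (hws_mem _ hθ).1 (hwg_mem _ hθ).1)
    · exact le_refl 0
  have hFle : ∀ q ∈ F, c / 2 ≤ f q := by
    intro q hq
    rw [hf_def]
    beta_reduce
    rw [if_pos (hFcond q hq)]
    exact hΔterms q hq
  have h7 : (n : ℝ) * (c / 2) ≤ ∑ q ∈ F, f q := by
    have := Finset.card_nsmul_le_sum F f (c / 2) hFle
    rwa [hFcard, nsmul_eq_mul] at this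
  have h6 : ∑ q ∈ F, f q ≤ ∑' q, f q :=
    Summable.sum_le_tsum F (fun q _ => hf_nonneg q) hsum
  have hM : M ≤ (n : ℝ) * (p / σ2 * (c / 2)) := by
    rw [div_le_iff₀ (by positivity)] at hn
    linarith
  calc M ≤ (n : ℝ) * (p / σ2 * (c / 2)) := hM
    _ = p / σ2 * ((n : ℝ) * (c / 2)) := by ring
    _ ≤ p / σ2 * (∑ q ∈ F, f q) := by
        exact mul_le_mul_of_nonneg_left h7 hpσ.le
    _ ≤ p / σ2 * (∑' q, f q) := mul_le_mul_of_nonneg_left h6 hpσ.le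
    _ = ηreg ws wg h α p σ2 Δ := rfl
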